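/- (Jacobson) If A is a (left and right) artinian ring and B is a nil weakly closed subset of A, then the subring of A generated by B is nilpotent. -/

import Mathlib

/-- A subset `S` of a ring is nilpotent (of some exponent `n > 0`) if all products of
`n` elements of `S` vanish. -/
def SetNilpotent {A : Type} [Ring A] (S : Set A) : Prop :=
  ∃ n : ℕ, 0 < n ∧ ∀ l : List A, l.length = n → (∀ x ∈ l, x ∈ S) → l.prod = 0

namespace JNWC

section Hopkins

set_option linter.unusedSectionVars false

variable (R : Type*) [Ring R]

local notation "J" => Ideal.jacobson (⊥ : Ideal R)

theorem exists_left_inv_one_sub {x : R} (hx : x ∈ J) :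
    ∃ u : R, u * (1 - x) = 1 := by
  by_contra h
  push_neg at h
  have hne : Ideal.span {(1:R) - x} ≠ ⊤ := by
    intro htop
    have h1 : (1:R) ∈ Ideal.span {(1:R) - x} := htop ▸ Submodule.mem_top
    obtain ⟨u, hu⟩ := Ideal.mem_span_singleton'.mp h1
    exact h u hu
  obtain ⟨m, hm, hle⟩ := Ideal.exists_le_maximal _ hne
  have hxm : x ∈ m := (sInf_le ⟨bot_le, hm⟩ : J ≤ m) hx
  have h1m : (1:R) - x ∈ m := hle (Ideal.subset_span rfl)
  have h1 : (1:R) ∈ m := by simpa using m.add_mem h1m hxm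
  exact hm.ne_top (Ideal.eq_top_of_isUnit_mem m h1 isUnit_one)

/-- two-sidedness of the Jacobson radical -/
theorem jacobson_bot_mul_mem_right {x : R} (hx : x ∈ J) (r : R) : x * r ∈ J := by
  refine Ideal.mem_sInf.mpr ?_
  rintro m ⟨-, hm⟩
  by_cases hr : r ∈ m
  · exact m.smul_mem x hr
  · -- use the maximal left ideal {y | y * r ∈ m}
    haveI : IsSimpleModule R (R ⧸ m) := isSimpleModule_iff_isCoatom.mpr hm.out
    have hr0 : (Submodule.Quotient.mk r : R ⧸ m) ≠ 0 := by
      simpa [Submodule.Quotient.mk_eq_zero] using hr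
    have hmax := IsSimpleModule.ker_toSpanSingleton_isMaximal R (M := R ⧸ m) hr0
    have hxk : x ∈ LinearMap.ker (LinearMap.toSpanSingleton R (R ⧸ m) (Submodule.Quotient.mk r)) :=
      (Ideal.mem_sInf.mp hx) ⟨bot_le, hmax⟩
    have : x • (Submodule.Quotient.mk r : R ⧸ m) = 0 := hxk
    rwa [← Submodule.Quotient.mk_smul, Submodule.Quotient.mk_eq_zero, smul_eq_mul] at this

variable [IsArtinianRing R]

/-- powers of the radical -/
noncomputable def Jp : ℕ → Ideal R
  | 0 => ⊤
  | (k+1) => J • Jp k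

theorem Jp_antitone : ∀ k, Jp R (k+1) ≤ Jp R k := by
  intro k; exact Submodule.smul_le_right

theorem Jp_le_of_le : ∀ {i j : ℕ}, i ≤ j → Jp R j ≤ Jp R i :=
  fun h => antitone_nat_of_succ_le (Jp_antitone R) h

theorem Jp_mul_mem_right : ∀ k, ∀ {y : R}, y ∈ Jp R k → ∀ r : R, y * r ∈ Jp R k := by
  intro k
  induction k with
  | zero => intro y _ r; exact Submodule.mem_top
  | succ k ih =>
    intro y hy r
    refine Submodule.smul_induction_on hy (fun j hj n hn => ?_) (fun a b ha hb => ?_)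
    · have : j * (n * r) ∈ J • Jp R k := Submodule.smul_mem_smul hj (ih hn r)
      simpa [mul_assoc, Jp] using this
    · simpa [add_mul] using Submodule.add_mem _ (ha) (hb)

theorem Jp_one : Jp R 1 = J := by
  apply le_antisymm
  · show J • (⊤ : Ideal R) ≤ J
    refine Submodule.smul_le.mpr fun r hr x _ => ?_
    exact jacobson_bot_mul_mem_right R hr x
  · intro x hx
    have : x • (1:R) ∈ J • (⊤ : Ideal R) := Submodule.smul_mem_smul hx Submodule.mem_top
    simpa [Jp] using this

theorem Jp_add_le (a b : ℕ) : Jp R (a + b) ≤ Jp R a • Jp R b := by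
  induction a with
  | zero => simpa [Jp] using le_of_eq (Submodule.top_smul (Jp R b)).symm
  | succ a ih =>
    have e : a + 1 + b = (a + b) + 1 := by omega
    rw [e, show Jp R ((a+b)+1) = J • Jp R (a+b) from rfl,
      show Jp R (a+1) = J • Jp R a from rfl, Submodule.smul_assoc]
    exact smul_mono_right _ ih

theorem Jp_eventually_bot : ∃ n, Jp R n = ⊥ := by
  obtain ⟨n, hn'⟩ := IsArtinian.monotone_stabilizes
    (⟨fun k => OrderDual.toDual (Jp R k),
      fun i j hij => OrderDual.toDual_le_toDual.mpr (Jp_le_of_le R hij)⟩ : ℕ →o (Ideal R)ᵒᵈ)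
  have hn : ∀ m, n ≤ m → Jp R n = Jp R m := fun m hm => congrArg OrderDual.ofDual (hn' m hm)
  refine ⟨n+1, ?_⟩
  by_contra hK
  set K := Jp R (n+1) with hKdef
  have hKJ : K ≤ J := by rw [← Jp_one R]; exact Jp_le_of_le R (by omega)
  have hKK : K ≤ K • K := by
    calc K = Jp R n := (hn (n+1) (by omega)).symm
    _ = Jp R ((n+1) + (n+1)) := hn _ (by omega)
    _ ≤ K • K := Jp_add_le R (n+1) (n+1)
  obtain ⟨𝔞, h𝔞F, h𝔞min⟩ := IsArtinian.set_has_minimal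
    {I : Ideal R | K • I ≠ ⊥} (⟨⊤, by
      intro hbot
      apply hK
      rw [eq_bot_iff]
      intro x hx
      have : x • (1:R) ∈ K • ⊤ := Submodule.smul_mem_smul hx Submodule.mem_top
      rw [hbot] at this
      simpa using this⟩)
  have h𝔞 : ∃ a ∈ 𝔞, K • Ideal.span {a} ≠ ⊥ := by
    by_contra hno
    push_neg at hno
    apply h𝔞F
    rw [eq_bot_iff]
    refine Submodule.smul_le.mpr fun r hr a ha => ?_
    have : r • a ∈ K • Ideal.span {a} := Submodule.smul_mem_smul hr (Ideal.subset_span rfl)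
    rw [hno a ha] at this
    exact this
  obtain ⟨a, ha𝔞, hca⟩ := h𝔞
  set 𝔠 := K • Ideal.span {a} with h𝔠def
  have h𝔠le : 𝔠 ≤ 𝔞 := Submodule.smul_le.mpr fun r _ x hx =>
    𝔞.smul_mem r (((Ideal.span_le).mpr (by simpa using ha𝔞)) hx)
  have h𝔠F : K • 𝔠 ≠ ⊥ := by
    intro hbot
    apply hca
    rw [eq_bot_iff]
    calc 𝔠 = K • Ideal.span {a} := rfl
    _ ≤ (K • K) • Ideal.span {a} := Submodule.smul_mono_left hKK
    _ = K • 𝔠 := by rw [Submodule.smul_assoc]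
    _ ≤ ⊥ := le_of_eq hbot
  have h𝔠eq : 𝔠 = 𝔞 := by
    by_contra hne
    exact h𝔞min 𝔠 h𝔠F (lt_of_le_of_ne h𝔠le hne)
  have hrep : ∀ y ∈ 𝔠, ∃ k ∈ K, y = k * a := by
    intro y hy
    refine Submodule.smul_induction_on hy (fun k hk x hx => ?_) (fun y z hy hz => ?_)
    · obtain ⟨r, rfl⟩ := Ideal.mem_span_singleton'.mp hx
      exact ⟨k * r, Jp_mul_mem_right R (n+1) hk r, by rw [smul_eq_mul, mul_assoc]⟩
    · obtain ⟨k1, hk1, rfl⟩ := hy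
      obtain ⟨k2, hk2, rfl⟩ := hz
      exact ⟨k1 + k2, K.add_mem hk1 hk2, by rw [add_mul]⟩
  obtain ⟨k, hkK, hka⟩ := hrep a (h𝔠eq ▸ ha𝔞)
  obtain ⟨u, hu⟩ := exists_left_inv_one_sub R (hKJ hkK)
  have ha0 : a = 0 := by
    have h1 : (1 - k) * a = 0 := by rw [sub_mul, one_mul, ← hka, sub_self]
    calc a = 1 * a := (one_mul a).symm
    _ = (u * (1 - k)) * a := by rw [hu]
    _ = u * ((1 - k) * a) := by rw [mul_assoc]
    _ = 0 := by rw [h1, mul_zero]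
  apply hca
  rw [h𝔠def, ha0, show ({0} : Set R) = ↑(⊥ : Ideal R) by simp, Ideal.span_eq]
  exact Submodule.smul_bot K


open Submodule in
theorem ssprod {M N : Type*} [AddCommGroup M] [Module R M] [AddCommGroup N] [Module R N]
    [IsSemisimpleModule R M] [IsSemisimpleModule R N] : IsSemisimpleModule R (M × N) := by
  refine isSemisimpleModule_of_isSemisimpleModule_submodule'
    (p := fun b : Bool => if b then Submodule.fst R M N else Submodule.snd R M N) ?_ ?_
  · rintro (_|_)
    · simpa using IsSemisimpleModule.congr (Submodule.sndEquiv R M N)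
    · simpa using IsSemisimpleModule.congr (Submodule.fstEquiv R M N)
  · rw [iSup_bool_eq]
    simpa using Submodule.fst_sup_snd R M N

theorem ss_of_injective {M N : Type*} [AddCommGroup M] [Module R M] [AddCommGroup N] [Module R N]
    [IsSemisimpleModule R N] (f : M →ₗ[R] N) (hf : Function.Injective f) :
    IsSemisimpleModule R M :=
  IsSemisimpleModule.congr (LinearEquiv.ofInjective f hf)

theorem ss_of_surjective {M N : Type*} [AddCommGroup M] [Module R M] [AddCommGroup N] [Module R N]
    [IsSemisimpleModule R M] (f : M →ₗ[R] N) (hf : Function.Surjective f) :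
    IsSemisimpleModule R N :=
  IsSemisimpleModule.congr (LinearMap.quotKerEquivOfSurjective f hf).symm

/-- quotients by ideals containing a finite intersection of maximal left ideals
are semisimple -/
theorem ss_of_finset_inf_le (s : Finset (Ideal R)) :
    (∀ m ∈ s, m.IsMaximal) → ∀ I : Ideal R, s.inf id ≤ I → IsSemisimpleModule R (R ⧸ I) := by
  classical
  induction s using Finset.induction_on with
  | empty =>
    intro _ I hle
    have hI : I = ⊤ := top_le_iff.mp (by simpa using hle)
    subst hI
    haveI : Subsingleton (R ⧸ (⊤ : Ideal R)) := Submodule.Quotient.subsingleton_iff.mpr rfl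
    exact (isSemisimpleModule_iff R _).mpr Subsingleton.instComplementedLattice
  | @insert m s hm ih =>
    intro hmax I hle
    haveI hZ' : IsSemisimpleModule R (R ⧸ s.inf id) :=
      ih (fun x hx => hmax x (Finset.mem_insert_of_mem hx)) _ le_rfl
    have hmm : m.IsMaximal := hmax m (Finset.mem_insert_self m s)
    haveI : IsSimpleModule R (R ⧸ m) := isSimpleModule_iff_isCoatom.mpr hmm.out
    haveI : IsSemisimpleModule R ((R ⧸ m) × (R ⧸ s.inf id)) := ssprod R
    -- R ⧸ (m ⊓ inf s) embeds
    set g : R →ₗ[R] (R ⧸ m) × (R ⧸ s.inf id) := LinearMap.prod m.mkQ (s.inf id).mkQ with hg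
    have hker : LinearMap.ker g = m ⊓ s.inf id := by
      rw [hg, LinearMap.ker_prod, Submodule.ker_mkQ, Submodule.ker_mkQ]
    haveI hss0 : IsSemisimpleModule R (R ⧸ (m ⊓ s.inf id)) := by
      haveI : IsSemisimpleModule R (R ⧸ LinearMap.ker g) :=
        IsSemisimpleModule.congr (LinearMap.quotKerEquivRange g)
      rwa [hker] at this
    -- surject onto R ⧸ I
    have hle' : m ⊓ s.inf id ≤ I := by simpa using hle
    refine ss_of_surjective R (Submodule.mapQ _ I LinearMap.id hle') ?_
    intro x
    obtain ⟨r, rfl⟩ := Submodule.Quotient.mk_surjective I x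
    exact ⟨Submodule.Quotient.mk r, by simp [Submodule.mapQ_apply]⟩


theorem exists_finset_inf_maximals_eq_jacobson :
    ∃ s : Finset (Ideal R), (∀ m ∈ s, m.IsMaximal) ∧ s.inf id = J := by
  classical
  obtain ⟨Z, hZF, hZmin⟩ := IsArtinian.set_has_minimal
    {I : Ideal R | ∃ s : Finset (Ideal R), (∀ m ∈ s, m.IsMaximal) ∧ I = s.inf id}
    ⟨⊤, ⟨∅, by simp, by simp⟩⟩
  obtain ⟨s, hsmax, rfl⟩ := hZF
  refine ⟨s, hsmax, le_antisymm ?_ ?_⟩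
  · -- inf ≤ every maximal: show inf ≤ jacobson
    refine le_sInf ?_
    rintro m ⟨-, hm⟩
    by_contra hnle
    have hlt : s.inf id ⊓ m < s.inf id := by
      refine lt_of_le_of_ne inf_le_left fun h => hnle ?_
      rw [← h]; exact inf_le_right
    refine hZmin (s.inf id ⊓ m) ⟨insert m s, ?_, ?_⟩ hlt
    · intro x hx
      rcases Finset.mem_insert.mp hx with rfl | hx
      · exact hm
      · exact hsmax x hx
    · rw [Finset.inf_insert]
      simp [inf_comm]
  · exact Finset.le_inf fun m hm => sInf_le ⟨bot_le, hsmax m hm⟩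

theorem semisimple_of_jacobson_ann {M : Type*} [AddCommGroup M] [Module R M]
    (hann : ∀ x ∈ J, ∀ m : M, x • m = (0 : M)) : IsSemisimpleModule R M := by
  obtain ⟨s, hsmax, hsinf⟩ := exists_finset_inf_maximals_eq_jacobson R
  refine isSemisimpleModule_of_isSemisimpleModule_submodule'
    (p := fun m : M => Submodule.span R {m}) (fun m => ?_) ?_
  · -- span{m} ≅ R ⧸ ker(toSpanSingleton)
    haveI : IsSemisimpleModule R (R ⧸ LinearMap.ker (LinearMap.toSpanSingleton R M m)) := by
      refine ss_of_finset_inf_le R s hsmax _ ?_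
      rw [hsinf]
      intro x hx
      exact LinearMap.mem_ker.mpr (hann x hx m)
    have e1 : (R ⧸ LinearMap.ker (LinearMap.toSpanSingleton R M m)) ≃ₗ[R]
        LinearMap.range (LinearMap.toSpanSingleton R M m) :=
      LinearMap.quotKerEquivRange _
    have e2 : LinearMap.range (LinearMap.toSpanSingleton R M m) = Submodule.span R {m} :=
      (LinearMap.span_singleton_eq_range R M m).symm
    have : IsSemisimpleModule R (LinearMap.range (LinearMap.toSpanSingleton R M m)) :=
      IsSemisimpleModule.congr e1.symm
    rwa [e2] at this
  · rw [eq_top_iff]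
    intro x _
    exact Submodule.mem_iSup_of_mem x (Submodule.mem_span_singleton_self x)

theorem hopkins : IsNoetherianRing R := by
  obtain ⟨n, hn⟩ := Jp_eventually_bot R
  have key : ∀ k : ℕ, IsNoetherian R (R ⧸ Jp R k) := by
    intro k
    induction k with
    | zero =>
      haveI : Subsingleton (R ⧸ Jp R 0) := Submodule.Quotient.subsingleton_iff.mpr rfl
      infer_instance
    | succ k ih =>
      set f : (Jp R k) →ₗ[R] R ⧸ Jp R (k+1) := (Jp R (k+1)).mkQ.comp (Jp R k).subtype with hf
      haveI hssl : IsSemisimpleModule R ((Jp R k) ⧸ LinearMap.ker f) := by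
        apply semisimple_of_jacobson_ann R
        intro x hx q
        obtain ⟨⟨y, hy⟩, rfl⟩ := Submodule.Quotient.mk_surjective _ q
        rw [← Submodule.Quotient.mk_smul, Submodule.Quotient.mk_eq_zero, LinearMap.mem_ker]
        have hxy : x • y ∈ Jp R (k+1) := Submodule.smul_mem_smul hx hy
        simp only [hf, LinearMap.comp_apply, Submodule.subtype_apply, Submodule.coe_smul,
          Submodule.mkQ_apply, Submodule.Quotient.mk_eq_zero]
        exact hxy
      haveI hart : IsArtinian R ((Jp R k) ⧸ LinearMap.ker f) := inferInstance
      haveI hnoel : IsNoetherian R ((Jp R k) ⧸ LinearMap.ker f) :=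
        (IsSemisimpleModule.finite_tfae.out 2 1).mp hart
      haveI hS : IsNoetherian R (LinearMap.range f) :=
        isNoetherian_of_linearEquiv (LinearMap.quotKerEquivRange f)
      have hrange : LinearMap.range f = Submodule.map (Jp R (k+1)).mkQ (Jp R k) := by
        rw [hf, LinearMap.range_comp, Submodule.range_subtype]
      have equot : ((R ⧸ Jp R (k+1)) ⧸ LinearMap.range f) ≃ₗ[R] R ⧸ Jp R k := by
        rw [hrange]
        exact Submodule.quotientQuotientEquivQuotient (Jp R (k+1)) (Jp R k) (Jp_antitone R k)
      haveI hQ : IsNoetherian R ((R ⧸ Jp R (k+1)) ⧸ LinearMap.range f) :=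
        isNoetherian_of_linearEquiv equot.symm
      exact (isNoetherian_iff_submodule_quotient (LinearMap.range f)).mpr ⟨hS, hQ⟩
  have : IsNoetherian R (R ⧸ Jp R n) := key n
  exact isNoetherian_of_linearEquiv (Submodule.quotEquivOfEqBot _ hn)

end Hopkins
section Grand

set_option linter.unusedSectionVars false
set_option maxHeartbeats 1000000

variable {A : Type} [Ring A]

open MulOpposite

theorem mem_mul_right {N : Submodule Aᵐᵒᵖ A} {n : A} (hn : n ∈ N) (a : A) : n * a ∈ N := by
  have := N.smul_mem (op a) hn
  rwa [op_smul_eq_mul] at this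

theorem central_comm {γ : A} (hγ : γ ∈ Set.center A) (x : A) : x * γ = γ * x :=
  Semigroup.mem_center_iff.mp hγ x

theorem central_mem {N : Submodule Aᵐᵒᵖ A} {γ n : A} (hγ : γ ∈ Set.center A) (hn : n ∈ N) :
    γ * n ∈ N := by
  rw [← central_comm hγ n]
  exact mem_mul_right hn γ

/-- left multiplication as a right-module endomorphism -/
def lmulr (b : A) : A →ₗ[Aᵐᵒᵖ] A where
  toFun := (b * ·)
  map_add' := mul_add b
  map_smul' r x := by simp [MulOpposite.smul_eq_mul_unop, mul_assoc]

/-- `x` maps `N` into `P` by left multiplication. -/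
def MT (x : A) (N P : Submodule Aᵐᵒᵖ A) : Prop := ∀ n ∈ N, x * n ∈ P

def Stab (C : Set A) (N : Submodule Aᵐᵒᵖ A) : Prop := ∀ c ∈ C, MT c N N

/-- weak closure with central multipliers -/
def WC (C : Set A) : Prop := ∀ a ∈ C, ∀ b ∈ C, ∃ γ ∈ Set.center A, a * b + γ * (b * a) ∈ C

def Good (C : Set A) (N₁ N : Submodule Aᵐᵒᵖ A) : Prop :=
  ∃ k : ℕ, 0 < k ∧ ∀ l : List A, l.length = k → (∀ x ∈ l, x ∈ C) → MT l.prod N N₁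

theorem word_stab {C : Set A} {N : Submodule Aᵐᵒᵖ A} (h : Stab C N) :
    ∀ l : List A, (∀ x ∈ l, x ∈ C) → MT l.prod N N := by
  intro l
  induction l with
  | nil => intro _ n hn; simpa using hn
  | cons a t ih =>
    intro hmem n hn
    rw [List.prod_cons, mul_assoc]
    exact h a (hmem a List.mem_cons_self) _ (ih (fun x hx => hmem x (List.mem_cons_of_mem a hx)) n hn)

theorem good_of_all {C : Set A} {N₁ N : Submodule Aᵐᵒᵖ A} (h : ∀ c ∈ C, MT c N N₁) :
    Good C N₁ N := by
  refine ⟨1, one_pos, ?_⟩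
  intro l hlen hmem
  obtain ⟨x, rfl⟩ := List.length_eq_one_iff.mp hlen
  rw [List.prod_singleton]
  exact h x (hmem x (List.mem_singleton_self x))

theorem good_comp {C : Set A} {N₁ Q N : Submodule Aᵐᵒᵖ A}
    (h1 : Good C N₁ Q) (h2 : Good C Q N) : Good C N₁ N := by
  obtain ⟨k₁, hk₁, hg1⟩ := h1
  obtain ⟨k₂, hk₂, hg2⟩ := h2
  refine ⟨k₁ + k₂, by omega, ?_⟩
  intro l hlen hmem n hn
  have hsplit : l = l.take k₁ ++ l.drop k₁ := (List.take_append_drop k₁ l).symm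
  have hlen1 : (l.take k₁).length = k₁ := by
    rw [List.length_take]; omega
  have hlen2 : (l.drop k₁).length = k₂ := by
    rw [List.length_drop]; omega
  have h2' : (l.drop k₁).prod * n ∈ Q :=
    hg2 _ hlen2 (fun x hx => hmem x (List.drop_subset _ l hx)) n hn
  have h1' : (l.take k₁).prod * ((l.drop k₁).prod * n) ∈ N₁ :=
    hg1 _ hlen1 (fun x hx => hmem x (List.take_subset _ l hx)) _ h2'
  have he : l.prod * n = (l.take k₁).prod * ((l.drop k₁).prod * n) := by
    conv_lhs => rw [hsplit]
    rw [List.prod_append, mul_assoc]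
  rw [he]; exact h1'

theorem good_long {C : Set A} {N₁ N : Submodule Aᵐᵒᵖ A} (hstab1 : Stab C N₁) {m : ℕ}
    (hk : ∀ l : List A, l.length = m → (∀ x ∈ l, x ∈ C) → MT l.prod N N₁) :
    ∀ l : List A, m ≤ l.length → (∀ x ∈ l, x ∈ C) → MT l.prod N N₁ := by
  intro l hlen hmem n hn
  set j := l.length - m with hj
  have hsplit : l = l.take j ++ l.drop j := (List.take_append_drop j l).symm
  have hlen2 : (l.drop j).length = m := by rw [List.length_drop]; omega
  have h2' : (l.drop j).prod * n ∈ N₁ :=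
    hk _ hlen2 (fun x hx => hmem x (List.drop_subset _ l hx)) n hn
  have h1' : (l.take j).prod * ((l.drop j).prod * n) ∈ N₁ :=
    word_stab hstab1 _ (fun x hx => hmem x (List.take_subset _ l hx)) _ h2'
  have he : l.prod * n = (l.take j).prod * ((l.drop j).prod * n) := by
    conv_lhs => rw [hsplit]
    rw [List.prod_append, mul_assoc]
  rw [he]; exact h1'

/-- the annihilator-type submodule `{x | ∀ c ∈ C, c * x ∈ P}` -/
def Kann (C : Set A) (P : Submodule Aᵐᵒᵖ A) : Submodule Aᵐᵒᵖ A where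
  carrier := {x | ∀ c ∈ C, c * x ∈ P}
  add_mem' := fun hx hy c hc => by
    rw [mul_add]; exact P.add_mem (hx c hc) (hy c hc)
  zero_mem' := fun c hc => by rw [mul_zero]; exact P.zero_mem
  smul_mem' := fun r x hx c hc => by
    rw [MulOpposite.smul_eq_mul_unop, ← mul_assoc]
    exact mem_mul_right (hx c hc) _

theorem mem_Kann {C : Set A} {P : Submodule Aᵐᵒᵖ A} {x : A} :
    x ∈ Kann C P ↔ ∀ c ∈ C, c * x ∈ P := Iff.rfl

/-- the additive group of elements mapping `N` into `N₁` -/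
def MTgroup (N N₁ : Submodule Aᵐᵒᵖ A) : AddSubgroup A where
  carrier := {x | ∀ n ∈ N, x * n ∈ N₁}
  add_mem' := fun hx hy n hn => by rw [add_mul]; exact N₁.add_mem (hx n hn) (hy n hn)
  zero_mem' := fun n hn => by rw [zero_mul]; exact N₁.zero_mem
  neg_mem' := fun {x} hx n hn => by rw [neg_mul]; exact N₁.neg_mem (hx n hn)

theorem last_true {P : ℕ → Prop} : ∀ {m : ℕ}, P 0 → ¬ P m → ∃ j, P j ∧ ¬ P (j+1) := by
  intro m
  induction m with
  | zero => intro h0 hm; exact absurd h0 hm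
  | succ m ih =>
    intro h0 hm
    by_cases h : P m
    · exact ⟨m, h, hm⟩
    · exact ih h0 h

def PRel (p q : Submodule Aᵐᵒᵖ A × Submodule Aᵐᵒᵖ A) : Prop :=
  (q.1 ≤ p.1 ∧ p.2 ≤ q.2) ∧ (q.1 < p.1 ∨ p.2 < q.2)

instance : IsIrrefl (Submodule Aᵐᵒᵖ A × Submodule Aᵐᵒᵖ A) PRel :=
  ⟨fun p h => by rcases h.2 with h' | h' <;> exact lt_irrefl _ h'⟩

instance : IsTrans (Submodule Aᵐᵒᵖ A × Submodule Aᵐᵒᵖ A) PRel := by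
  constructor
  rintro p q r ⟨⟨hq1, hq2⟩, hqs⟩ ⟨⟨hr1, hr2⟩, hrs⟩
  refine ⟨⟨le_trans hr1 hq1, le_trans hq2 hr2⟩, ?_⟩
  rcases hqs with h | h
  · exact Or.inl (lt_of_le_of_lt hr1 h)
  · exact Or.inr (lt_of_lt_of_le h hr2)

instance : IsStrictOrder (Submodule Aᵐᵒᵖ A × Submodule Aᵐᵒᵖ A) PRel := ⟨⟩

theorem pRel_wf [IsArtinian Aᵐᵒᵖ A] [IsNoetherian Aᵐᵒᵖ A] :
    WellFounded (PRel (A := A)) := by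
  rw [RelEmbedding.wellFounded_iff_isEmpty]
  constructor
  intro f
  have hstep : ∀ n : ℕ, PRel (f (n+1)) (f n) := fun n => f.map_rel_iff.mpr (by omega)
  have mono1 : Monotone (fun n => (f n).1) :=
    monotone_nat_of_le_succ (fun n => (hstep n).1.1)
  have mono2 : Monotone (fun n => OrderDual.toDual ((f n).2)) :=
    monotone_nat_of_le_succ (fun n => OrderDual.toDual_le_toDual.mpr (hstep n).1.2)
  obtain ⟨n₁, hn₁⟩ := monotone_stabilizes_iff_noetherian.mpr inferInstance ⟨fun n => (f n).1, mono1⟩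
  obtain ⟨n₂, hn₂⟩ := IsArtinian.monotone_stabilizes ⟨fun n => OrderDual.toDual ((f n).2), mono2⟩
  set nn := max n₁ n₂
  have h1 : (f nn).1 = (f (nn+1)).1 :=
    ((hn₁ nn (le_max_left _ _)).symm.trans (hn₁ (nn+1) (by omega)) : (f nn).1 = (f (nn+1)).1)
  have h2 : (f nn).2 = (f (nn+1)).2 := by
    have e1 := hn₂ nn (le_max_right _ _)
    have e2 := hn₂ (nn+1) (by omega)
    exact congrArg OrderDual.ofDual (e1.symm.trans e2)
  rcases (hstep nn).2 with hlt | hlt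
  · rw [h1] at hlt; exact lt_irrefl _ hlt
  · rw [h2] at hlt; exact lt_irrefl _ hlt


theorem grand [IsArtinian Aᵐᵒᵖ A] [IsNoetherian Aᵐᵒᵖ A]
    (p : Submodule Aᵐᵒᵖ A × Submodule Aᵐᵒᵖ A) :
    ∀ C : Set A, (∀ c ∈ C, IsNilpotent c) → WC C → p.1 ≤ p.2 → Stab C p.2 → Stab C p.1 →
      Good C p.1 p.2 := by
  refine pRel_wf.induction (C := fun p => ∀ C : Set A,
    (∀ c ∈ C, IsNilpotent c) → WC C → p.1 ≤ p.2 → Stab C p.2 → Stab C p.1 →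
      Good C p.1 p.2) p ?_
  clear p
  rintro ⟨N₁, N⟩ IH C hCnil hCwc hle hstabN hstab1
  dsimp only at IH hle hstabN hstab1 ⊢
  classical
  by_cases htriv : N ≤ N₁
  · exact good_of_all (fun c hc n hn => hstab1 c hc n (htriv hn))
  have hlt : N₁ < N := lt_of_le_not_ge hle htriv
  by_cases hstabmid : ∃ Q, N₁ < Q ∧ Q < N ∧ Stab C Q
  · obtain ⟨Q, hQ1, hQ2, hQs⟩ := hstabmid
    have g1 : Good C N₁ Q :=
      IH (N₁, Q) ⟨⟨le_rfl, hQ2.le⟩, Or.inr hQ2⟩ C hCnil hCwc hQ1.le hQs hstab1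
    have g2 : Good C Q N :=
      IH (Q, N) ⟨⟨hQ1.le, le_rfl⟩, Or.inl hQ1⟩ C hCnil hCwc hQ2.le hstabN hQs
    exact good_comp g1 g2
  by_cases hmid : ∃ Q, N₁ < Q ∧ Q < N
  case neg =>
    -- no intermediate submodules at all: single elements already work
    refine good_of_all ?_
    intro b hb n hn
    by_contra hout
    set Ib := N₁ ⊔ Submodule.map (lmulr b) N with hIb
    have h1 : N₁ ≤ Ib := le_sup_left
    have h2 : Ib ≤ N := sup_le hle (Submodule.map_le_iff_le_comap.mpr
      (fun x hx => hstabN b hb x hx))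
    have hne1 : N₁ ≠ Ib := by
      intro h
      apply hout
      have : b * n ∈ Ib := Submodule.mem_sup_right ⟨n, hn, rfl⟩
      rwa [← h] at this
    have hIbN : Ib = N := by
      by_contra hne
      exact hmid ⟨Ib, lt_of_le_of_ne h1 hne1, lt_of_le_of_ne h2 hne⟩
    obtain ⟨ν, hν⟩ := hCnil b hb
    have hiter : ∀ j : ℕ, N ≤ N₁ ⊔ Submodule.map (lmulr (b^(j+1))) N := by
      intro j
      induction j with
      | zero => simpa [pow_one] using hIbN.ge
      | succ j ih =>
        refine le_trans hIbN.ge (sup_le le_sup_left ?_)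
        rw [Submodule.map_le_iff_le_comap]
        intro x hx
        have hx' : x ∈ N₁ ⊔ Submodule.map (lmulr (b^(j+1))) N := ih hx
        obtain ⟨q, hq, r, hr, rfl⟩ := Submodule.mem_sup.mp hx'
        obtain ⟨n', hn', rfl⟩ := hr
        show lmulr b (q + lmulr (b^(j+1)) n') ∈ N₁ ⊔ Submodule.map (lmulr (b^(j+2))) N
        have he : lmulr b (q + lmulr (b^(j+1)) n') = b * q + (b^(j+2)) * n' := by
          show b * (q + b^(j+1) * n') = _
          rw [mul_add, ← mul_assoc, ← pow_succ']
        rw [he]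
        exact Submodule.add_mem _ (Submodule.mem_sup_left (hstab1 b hb q hq))
          (Submodule.mem_sup_right ⟨n', hn', rfl⟩)
    have hfin := hiter ν
    have hz : b^(ν+1) = 0 := by rw [pow_succ, hν, zero_mul]
    rw [hz] at hfin
    have hmap0 : Submodule.map (lmulr (0:A)) N = ⊥ := by
      rw [eq_bot_iff]
      rintro x ⟨y, hy, rfl⟩
      show (0:A) * y ∈ (⊥ : Submodule Aᵐᵒᵖ A)
      simp
    rw [hmap0, sup_bot_eq] at hfin
    exact hout (hstab1 b hb n (hfin hn))
  case pos =>
    obtain ⟨Q₀, hQ₀1, hQ₀2⟩ := hmid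
    -- the stabilizer subsystem of an intermediate submodule
    set CQ : Submodule Aᵐᵒᵖ A → Set A := fun Q => {c | c ∈ C ∧ MT c Q Q} with hCQdef
    have hCQsub : ∀ Q, CQ Q ⊆ C := fun Q c hc => hc.1
    have hCQwc : ∀ Q, WC (CQ Q) := by
      intro Q a ha b hb
      obtain ⟨γ, hγ, hc⟩ := hCwc a ha.1 b hb.1
      refine ⟨γ, hγ, hc, ?_⟩
      intro q hq
      have he : (a * b + γ * (b * a)) * q = a * (b * q) + γ * (b * (a * q)) := by
        noncomm_ring
      rw [he]
      exact Q.add_mem (ha.2 _ (hb.2 q hq)) (central_mem hγ (hb.2 _ (ha.2 q hq)))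
    have hGoodCQ : ∀ Q, N₁ < Q → Q < N → Good (CQ Q) N₁ N := by
      intro Q h1 h2
      have hsQQ : Stab (CQ Q) Q := fun c hc => hc.2
      have hsN : Stab (CQ Q) N := fun c hc => hstabN c hc.1
      have hs1 : Stab (CQ Q) N₁ := fun c hc => hstab1 c hc.1
      have g1 : Good (CQ Q) N₁ Q := IH (N₁, Q) ⟨⟨le_rfl, h2.le⟩, Or.inr h2⟩ (CQ Q)
        (fun c hc => hCnil c hc.1) (hCQwc Q) h1.le hsQQ hs1
      have g2 : Good (CQ Q) Q N := IH (Q, N) ⟨⟨h1.le, le_rfl⟩, Or.inl h1⟩ (CQ Q)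
        (fun c hc => hCnil c hc.1) (hCQwc Q) h2.le hsN hsQQ
      exact good_comp g1 g2
    set KK : Submodule Aᵐᵒᵖ A → Submodule Aᵐᵒᵖ A := fun Q => N ⊓ Kann (CQ Q) N₁ with hKKdef
    have hKlow : ∀ Q, N₁ ≤ KK Q := fun Q =>
      le_inf hle (fun x hx => fun c hc => hstab1 c hc.1 x hx)
    have hKstrict : ∀ Q, N₁ < Q → Q < N → N₁ < KK Q := by
      intro Q h1 h2
      obtain ⟨m, hm0, hmgood⟩ := hGoodCQ Q h1 h2
      set P : ℕ → Prop := fun j => ∃ l : List A, l.length = j ∧ (∀ x ∈ l, x ∈ CQ Q) ∧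
        ∃ n ∈ N, l.prod * n ∉ N₁ with hPdef
      have hP0 : P 0 := by
        obtain ⟨n, hnN, hnN₁⟩ := SetLike.exists_of_lt hlt
        exact ⟨[], rfl, by simp, n, hnN, by simpa using hnN₁⟩
      have hPm : ¬ P m := by
        rintro ⟨l, hlen, hmem, n, hn, hbad⟩
        exact hbad (hmgood l hlen hmem n hn)
      obtain ⟨j, hPj, hPj1⟩ := last_true hP0 hPm
      obtain ⟨l, hlen, hmem, n, hn, hbad⟩ := hPj
      rw [SetLike.lt_iff_le_and_exists]
      refine ⟨hKlow Q, l.prod * n, ?_, hbad⟩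
      refine Submodule.mem_inf.mpr ⟨word_stab (fun c hc => hstabN c (hCQsub Q hc)) l hmem n hn, ?_⟩
      intro c hc
      have hlen' : (c :: l).length = j + 1 := by simp [hlen]
      simp only [hPdef] at hPj1
      push_neg at hPj1
      have := hPj1 (c :: l) hlen' (by
        intro x hx
        rcases List.mem_cons.mp hx with rfl | h
        · exact hc
        · exact hmem x h) n hn
      rwa [List.prod_cons, mul_assoc] at this
    -- minimal kernel
    obtain ⟨K', hK'F, hK'min⟩ := IsArtinian.set_has_minimal
      {K : Submodule Aᵐᵒᵖ A | ∃ Q, N₁ < Q ∧ Q < N ∧ K = KK Q} ⟨KK Q₀, Q₀, hQ₀1, hQ₀2, rfl⟩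
    obtain ⟨Qs, hQs1, hQs2, rfl⟩ := hK'F
    set Cs := CQ Qs with hCsdef
    set Ks := KK Qs with hKsdef
    obtain ⟨m, hm0, hmgood⟩ := hGoodCQ Qs hQs1 hQs2
    set D : Set A := {a | a ∈ C ∧ ∃ n ∈ Ks, a * n ∉ N₁} with hDdef
    by_cases hDne : D.Nonempty
    case neg =>
      -- D empty: all of C kills Ks
      have hDall : ∀ a ∈ C, ∀ n ∈ Ks, a * n ∈ N₁ := by
        intro a ha n hn
        by_contra hbad
        exact hDne ⟨a, ha, n, hn, hbad⟩
      by_cases hKsN : Ks = N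
      · refine good_of_all ?_
        intro c hc n hn
        exact hDall c hc n (by rw [hKsN]; exact hn)
      · exfalso
        apply hstabmid
        refine ⟨Ks, hKstrict Qs hQs1 hQs2, lt_of_le_of_ne inf_le_left hKsN, ?_⟩
        intro c hc n hn
        exact (hKlow Qs) (hDall c hc n hn)
    case pos =>
      exfalso
      have hCsub : Cs ⊆ C := hCQsub Qs
      have hsCs1 : Stab Cs N₁ := fun c hc => hstab1 c hc.1
      have hsCsN : Stab Cs N := fun c hc => hstabN c hc.1
      have hKsleN : Ks ≤ N := inf_le_left
      -- Step 1: a "move-maximal" element of D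
      have hMove : ∃ a' ∈ D, ∀ b ∈ Cs, ∀ γ ∈ Set.center A,
          (b * a' + γ * (a' * b)) ∈ C → (b * a' + γ * (a' * b)) ∉ D := by
        by_contra hno
        push_neg at hno
        obtain ⟨a₀, ha₀⟩ := hDne
        have step : ∀ x : {x // x ∈ D}, ∃ y : {x // x ∈ D}, ∃ b ∈ Cs, ∃ γ ∈ Set.center A,
            (y : A) = b * (x : A) + γ * ((x : A) * b) := by
          rintro ⟨x, hx⟩
          obtain ⟨b, hb, γ, hγ, hC', hD'⟩ := hno x hx
          exact ⟨⟨_, hD'⟩, b, hb, γ, hγ, rfl⟩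
        choose st hst using step
        set f : ℕ → {x // x ∈ D} := fun t => st^[t] ⟨a₀, ha₀⟩ with hfdef
        set Gen : ℕ → Set A := fun t => {y | ∃ γ' ∈ Set.center A, ∃ w₁ w₂ : List A,
          (∀ z ∈ w₁, z ∈ Cs) ∧ (∀ z ∈ w₂, z ∈ Cs) ∧ w₁.length + w₂.length = t ∧
          y = γ' * (w₁.prod * (a₀ * w₂.prod))} with hGendef
        have hInv : ∀ t, (f t : A) ∈ AddSubgroup.closure (Gen t) := by
          intro t
          induction t with
          | zero =>
            refine AddSubgroup.subset_closure ?_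
            have hf0 : (f 0 : A) = a₀ := rfl
            exact ⟨1, Set.one_mem_center, [], [], by simp, by simp, by simp, by
              rw [hf0]; simp⟩
          | succ t ih =>
            have hft : f (t+1) = st (f t) := Function.iterate_succ_apply' st t _
            obtain ⟨b, hb, γ, hγ, he⟩ := hst (f t)
            set φ : A →+ A :=
              { toFun := fun x => b * x + γ * (x * b)
                map_zero' := by simp
                map_add' := fun x y => by noncomm_ring } with hφdef
            have hval : (f (t+1) : A) = φ (f t : A) := by rw [hft, he]; rfl
            rw [hval]
            have h1 : φ (f t : A) ∈ AddSubgroup.map φ (AddSubgroup.closure (Gen t)) :=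
              AddSubgroup.mem_map_of_mem φ ih
            rw [AddMonoidHom.map_closure] at h1
            refine (AddSubgroup.closure_le _).mpr ?_ h1
            rintro y ⟨g, hg, rfl⟩
            obtain ⟨γ', hγ', w₁, w₂, hw₁, hw₂, hlen', rfl⟩ := hg
            have hb1 : b * (γ' * (w₁.prod * (a₀ * w₂.prod)))
                = γ' * ((b :: w₁).prod * (a₀ * w₂.prod)) := by
              rw [List.prod_cons, ← mul_assoc b γ',
                show b * γ' = γ' * b from central_comm hγ' b]
              noncomm_ring
            have hb2 : γ * ((γ' * (w₁.prod * (a₀ * w₂.prod))) * b)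
                = (γ * γ') * (w₁.prod * (a₀ * (w₂ ++ [b]).prod)) := by
              rw [List.prod_append, List.prod_singleton]
              noncomm_ring
            show φ (γ' * (w₁.prod * (a₀ * w₂.prod))) ∈ AddSubgroup.closure (Gen (t+1))
            have : φ (γ' * (w₁.prod * (a₀ * w₂.prod)))
                = γ' * ((b :: w₁).prod * (a₀ * w₂.prod))
                  + (γ * γ') * (w₁.prod * (a₀ * (w₂ ++ [b]).prod)) := by
              rw [← hb1, ← hb2]; rfl
            rw [this]
            refine AddSubgroup.add_mem _ (AddSubgroup.subset_closure ?_)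
              (AddSubgroup.subset_closure ?_)
            · exact ⟨γ', hγ', b :: w₁, w₂, by
                intro z hz
                rcases List.mem_cons.mp hz with rfl | h
                · exact hb
                · exact hw₁ z h, hw₂, by simp [hlen']; omega, rfl⟩
            · exact ⟨γ * γ', Set.mul_mem_center hγ hγ', w₁, w₂ ++ [b], hw₁, by
                intro z hz
                rcases List.mem_append.mp hz with h | h
                · exact hw₂ z h
                · rw [List.mem_singleton.mp h]; exact hb, by simp [← hlen']; omega, rfl⟩
        -- all elements of the 2m-th closure map N into N₁
        have hkill : (f (2*m) : A) ∈ MTgroup N N₁ := by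
          refine (AddSubgroup.closure_le _).mpr ?_ (hInv (2*m))
          rintro y ⟨γ', hγ', w₁, w₂, hw₁, hw₂, hlen', rfl⟩
          intro n hn
          have ha₀C : a₀ ∈ C := ha₀.1
          have hgoal : γ' * (w₁.prod * (a₀ * (w₂.prod * n))) ∈ N₁ := by
            rcases le_or_gt m w₂.length with hcase | hcase
            · have h2 : w₂.prod * n ∈ N₁ := good_long hsCs1 hmgood w₂ hcase hw₂ n hn
              exact central_mem hγ' (word_stab hsCs1 w₁ hw₁ _ (hstab1 a₀ ha₀C _ h2))
            · have hcase1 : m ≤ w₁.length := by omega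
              have h2 : w₂.prod * n ∈ N := word_stab hsCsN w₂ hw₂ n hn
              have h3 : a₀ * (w₂.prod * n) ∈ N := hstabN a₀ ha₀C _ h2
              exact central_mem hγ' (good_long hsCs1 hmgood w₁ hcase1 hw₁ _ h3)
          have he : (γ' * (w₁.prod * (a₀ * w₂.prod))) * n
              = γ' * (w₁.prod * (a₀ * (w₂.prod * n))) := by noncomm_ring
          rw [he]; exact hgoal
        obtain ⟨-, nD, hnD, hbad⟩ := (f (2*m)).2
        exact hbad (hkill nD (hKsleN hnD))
      obtain ⟨a', ha'D, ha'max⟩ := hMove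
      have ha'C : a' ∈ C := ha'D.1
      -- Step 2: a' maps Ks into Ks
      have hαK : ∀ n ∈ Ks, a' * n ∈ Ks := by
        intro n hn
        have hnN : n ∈ N := hKsleN hn
        have hnKann : ∀ c ∈ Cs, c * n ∈ N₁ := (Submodule.mem_inf.mp hn).2
        refine Submodule.mem_inf.mpr ⟨hstabN a' ha'C n hnN, ?_⟩
        intro b hb
        obtain ⟨γ, hγ, hcC⟩ := hCwc b (hCsub hb) a' ha'C
        have hcnD : (b * a' + γ * (a' * b)) ∉ D := ha'max b hb γ hγ hcC
        have hcn : (b * a' + γ * (a' * b)) * n ∈ N₁ := by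
          by_contra hbad
          exact hcnD ⟨hcC, n, hn, hbad⟩
        have h2 : γ * (a' * (b * n)) ∈ N₁ := central_mem hγ (hstab1 a' ha'C _ (hnKann b hb))
        have he : b * (a' * n) = (b * a' + γ * (a' * b)) * n - γ * (a' * (b * n)) := by
          noncomm_ring
        rw [he]
        exact N₁.sub_mem hcn h2
      -- Step 3: contradiction with minimality
      by_cases hKsN : Ks = N
      · -- find an element of Ks \ N₁ killed by a'
        obtain ⟨ν, hν⟩ := hCnil a' ha'C
        set P' : ℕ → Prop := fun j => ∃ n ∈ Ks, a'^j * n ∉ N₁ with hP'def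
        have hP'0 : P' 0 := by
          obtain ⟨x, hx, hx1⟩ := SetLike.exists_of_lt (hKstrict Qs hQs1 hQs2)
          exact ⟨x, hx, by simpa using hx1⟩
        have hP'ν : ¬ P' ν := by
          rintro ⟨n, hn, hbad⟩
          exact hbad (by rw [hν, zero_mul]; exact N₁.zero_mem)
        obtain ⟨j, hPj, hPj1⟩ := last_true hP'0 hP'ν
        obtain ⟨n₀, hn₀, hbad₀⟩ := hPj
        have hxKs : ∀ i : ℕ, a'^i * n₀ ∈ Ks := by
          intro i
          induction i with
          | zero => simpa using hn₀
          | succ i ih =>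
            have : a'^(i+1) * n₀ = a' * (a'^i * n₀) := by rw [pow_succ', mul_assoc]
            rw [this]
            exact hαK _ ih
        simp only [hP'def] at hPj1
        push_neg at hPj1
        have hxN₁ : a' * (a'^j * n₀) ∈ N₁ := by
          have := hPj1 n₀ hn₀
          rwa [pow_succ', mul_assoc] at this
        set Q' : Submodule Aᵐᵒᵖ A := N ⊓ Kann {a'} N₁ with hQ'def
        have hQ'1 : N₁ < Q' := by
          rw [SetLike.lt_iff_le_and_exists]
          refine ⟨le_inf hle (fun x hx c hc => ?_), a'^j * n₀, ?_, hbad₀⟩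
          · rcases hc with rfl
            exact hstab1 c ha'C x hx
          · refine Submodule.mem_inf.mpr ⟨hKsleN (hxKs j), ?_⟩
            intro c hc
            rcases hc with rfl
            exact hxN₁
        have hQ'2 : Q' < N := by
          obtain ⟨-, nD, hnD, hbadD⟩ := ha'D
          refine lt_of_le_of_ne inf_le_left (fun h => hbadD ?_)
          have : nD ∈ Q' := by rw [h]; exact hKsleN hnD
          exact (Submodule.mem_inf.mp this).2 a' rfl
        apply hK'min (KK Q') ⟨Q', hQ'1, hQ'2, rfl⟩
        rw [SetLike.lt_iff_le_and_exists]
        obtain ⟨-, nD, hnD, hbadD⟩ := ha'D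
        refine ⟨le_trans inf_le_left (by rw [hKsN] : N ≤ Ks), nD, hnD, fun hmem => hbadD ?_⟩
        refine (Submodule.mem_inf.mp hmem).2 a' ⟨ha'C, ?_⟩
        -- a' stabilizes Q'
        intro q hq
        obtain ⟨hqN, hqK⟩ := Submodule.mem_inf.mp hq
        refine Submodule.mem_inf.mpr ⟨hstabN a' ha'C q hqN, ?_⟩
        intro c hc
        rcases hc with rfl
        exact hstab1 c ha'C _ (hqK c rfl)
      · -- Ks is a proper intermediate submodule: use Q' = Ks
        have hKsltN : Ks < N := lt_of_le_of_ne hKsleN hKsN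
        have hKs1 : N₁ < Ks := hKstrict Qs hQs1 hQs2
        apply hK'min (KK Ks) ⟨Ks, hKs1, hKsltN, rfl⟩
        rw [SetLike.lt_iff_le_and_exists]
        constructor
        · refine le_inf inf_le_left ?_
          intro x hx
          obtain ⟨hxN, hxK⟩ := Submodule.mem_inf.mp hx
          intro b hb
          refine hxK b ⟨hb.1, ?_⟩
          intro q hq
          exact hKs1.le ((Submodule.mem_inf.mp hq).2 b hb)
        · obtain ⟨-, nD, hnD, hbadD⟩ := ha'D
          refine ⟨nD, hnD, fun hmem => hbadD ?_⟩
          exact (Submodule.mem_inf.mp hmem).2 a' ⟨ha'C, fun q hq => hαK q hq⟩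

end Grand

/-- the `op`/`unop` linear equivalence between `Aᵐᵒᵖ` and `A` as right `A`-modules -/
def unopLinear (A : Type) [Ring A] : Aᵐᵒᵖ ≃ₗ[Aᵐᵒᵖ] A where
  toFun := MulOpposite.unop
  invFun := MulOpposite.op
  map_add' _ _ := rfl
  map_smul' _ _ := rfl
  left_inv _ := rfl
  right_inv _ := rfl

end JNWC

/-- (Jacobson) If `A` is a (left and right) artinian ring and `B` is a nil weakly closed
subset of `A`, then the subring of `A` generated by `B` is nilpotent (products of some
fixed length of elements of `B` are zero). -/
theorem jacobson_nil_weaklyClosed_nilpotent {A : Type} [Ring A]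
    (hartl : IsArtinianRing A) (hartr : IsArtinianRing Aᵐᵒᵖ)
    (B : Set A)
    (hwc : ∀ a ∈ B, ∀ b ∈ B, ∃ γ ∈ Set.center A, a * b + γ * (b * a) ∈ B)
    (hnil : ∀ a ∈ B, IsNilpotent a) :
    SetNilpotent B := by
  haveI := hartr
  haveI : IsArtinian Aᵐᵒᵖ A := isArtinian_of_linearEquiv (JNWC.unopLinear A)
  haveI : IsNoetherianRing Aᵐᵒᵖ := JNWC.hopkins Aᵐᵒᵖ
  haveI : IsNoetherian Aᵐᵒᵖ A := isNoetherian_of_linearEquiv (JNWC.unopLinear A)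
  have hstabT : JNWC.Stab B (⊤ : Submodule Aᵐᵒᵖ A) := fun b _ n _ => Submodule.mem_top
  have hstabB : JNWC.Stab B (⊥ : Submodule Aᵐᵒᵖ A) := by
    intro b _ n hn
    rw [Submodule.mem_bot] at hn
    simp [hn]
  obtain ⟨k, hk0, hk⟩ := JNWC.grand ((⊥ : Submodule Aᵐᵒᵖ A), (⊤ : Submodule Aᵐᵒᵖ A)) B
    hnil hwc bot_le hstabT hstabB
  refine ⟨k, hk0, fun l hlen hmem => ?_⟩
  have := hk l hlen hmem 1 Submodule.mem_top
  simpa using this
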